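/- There exist constants K ≥ 1 and c₀ ≥ 1 such that the following holds for every real c ≥ c₀, every integer n ≥ 2, and every natural number T with T ≥ K·c·log₂ n. Suppose p : ℕ → ℝ, d : ℕ → ℝ, and o : ℕ → Bool satisfy: p(0) = 1/2; for every t, p(t+1) = p(t)/2 if o(t) = true, and p(t+1) = min(2·p(t), 1/2) if o(t) = false; for every t, if d(t) ≤ 0.01 then o(t) = false; for every t, 0 ≤ d(t+1) ≤ 2·d(t); and 0 ≤ d(0) ≤ n/2. Call a round t < T type-1 golden if d(t) < 1 and p(t) = 1/2, and type-2 golden if d(t) ≥ 1/200 and d(t+1) > (2/3)·d(t). Then either at least c·log₂ n of the rounds t ∈ {0, …, T−1} are type-1 golden, or at least c·log₂ n of them are type-2 golden. -/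

import Mathlib

open Finset Real Classical

private lemma card_filter_succ (P : ℕ → Prop) [DecidablePred P] (n : ℕ) :
    ((Finset.range (n+1)).filter P).card
      = ((Finset.range n).filter P).card + if P n then 1 else 0 := by
  rw [Finset.range_add_one, Finset.filter_insert]
  split
  · rw [Finset.card_insert_of_notMem (by simp)]
  · simp

private lemma pot_count (ψ : ℕ → ℝ) (β : ℝ) (A B : ℕ → Prop)
    [DecidablePred A] [DecidablePred B]
    (hψ : ∀ t, 0 ≤ ψ t) (hβ : 0 ≤ β)
    (hA : ∀ t, A t → ψ (t+1) ≤ ψ t - 1)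
    (hB : ∀ t, ¬ A t → B t → ψ (t+1) ≤ ψ t + β)
    (hC : ∀ t, ¬ A t → ¬ B t → ψ (t+1) ≤ ψ t) :
    ∀ T, (((Finset.range T).filter A).card : ℝ) + ψ T
        ≤ ψ 0 + β * ((Finset.range T).filter B).card := by
  intro T
  induction T with
  | zero => simp
  | succ n ih =>
    rw [card_filter_succ A, card_filter_succ B]
    by_cases hAn : A n
    · have h1 := hA n hAn
      by_cases hBn : B n
      · simp only [hAn, hBn, if_true]
        push_cast
        nlinarith
      · simp only [hAn, hBn, if_true, if_false]
        push_cast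
        linarith
    · by_cases hBn : B n
      · have h1 := hB n hAn hBn
        simp only [hAn, hBn, if_true, if_false]
        push_cast
        nlinarith
      · have h1 := hC n hAn hBn
        simp only [hAn, hBn, if_false]
        push_cast
        linarith

private lemma half_pow_le (k : ℕ) : ((1:ℝ)/2)^(k+1) ≤ 1/2 := by
  induction k with
  | zero => norm_num
  | succ m ih =>
    rw [pow_succ]
    nlinarith [pow_nonneg (by norm_num : (0:ℝ) ≤ 1/2) (m+1)]

private lemma pk_inv (p : ℕ → ℝ) (o : ℕ → Bool)
    (hp0 : p 0 = 1/2)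
    (hot : ∀ t, o t = true → p (t+1) = p t / 2)
    (hof : ∀ t, o t = false → p (t+1) = min (2 * p t) (1/2)) :
    ∀ T, ∃ k : ℕ, p T = (1/2)^(k+1) ∧
      (((Finset.range T).filter (fun t => o t = false ∧ p t < 1/2)).card + k
        = ((Finset.range T).filter (fun t => o t = true)).card) := by
  intro T
  induction T with
  | zero => exact ⟨0, by simpa using hp0, by simp⟩
  | succ n ih =>
    obtain ⟨k, hpk, hcnt⟩ := ih
    rw [card_filter_succ (fun t => o t = false ∧ p t < 1/2),
        card_filter_succ (fun t => o t = true)]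
    cases hon : o n with
    | true =>
      refine ⟨k+1, ?_, ?_⟩
      · rw [hot n hon, hpk]; ring
      · simp only [hon, Bool.true_eq_false, false_and, if_false, if_true]
        omega
    | false =>
      rcases Nat.eq_zero_or_pos k with hk | hk
      · subst hk
        refine ⟨0, ?_, ?_⟩
        · rw [hof n hon, hpk]; norm_num
        · have hpn : ¬ (p n < 1/2) := by
            rw [hpk]; norm_num
          simp only [hon, hpn, and_false, if_false, Bool.false_eq_true]
          omega
      · obtain ⟨m, rfl⟩ : ∃ m, k = m + 1 := ⟨k - 1, by omega⟩
        have hplt : p n < 1/2 := by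
          rw [hpk, pow_succ]
          nlinarith [half_pow_le m]
        refine ⟨m, ?_, ?_⟩
        · rw [hof n hon, hpk]
          have h2 : (2:ℝ) * ((1/2)^(m+1+1)) = (1/2)^(m+1) := by ring
          rw [h2, min_eq_left (half_pow_le m)]
        · simp only [hon, hplt, and_true, if_true, Bool.false_eq_true, if_false]
          omega

set_option maxHeartbeats 3200000 in
/-- Golden-round counting lemma (Lemma `lem:manygolden` abstraction): in a run
of `T ≥ K·c·log₂ n` rounds of the desire-level process, either at least
`c·log₂ n` rounds are type-1 golden or at least `c·log₂ n` are type-2 golden. -/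
theorem stmt_9 :
    ∃ K c₀ : ℝ, 1 ≤ K ∧ 1 ≤ c₀ ∧
      ∀ (c : ℝ), c₀ ≤ c → ∀ (n : ℕ), 2 ≤ n → ∀ (T : ℕ),
        K * c * Real.logb 2 n ≤ (T : ℝ) →
        ∀ (p d : ℕ → ℝ) (o : ℕ → Bool),
          p 0 = 1 / 2 →
          (∀ t, o t = true → p (t + 1) = p t / 2) →
          (∀ t, o t = false → p (t + 1) = min (2 * p t) (1 / 2)) →
          (∀ t, d t ≤ 0.01 → o t = false) →
          (∀ t, 0 ≤ d (t + 1) ∧ d (t + 1) ≤ 2 * d t) →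
          0 ≤ d 0 → d 0 ≤ (n : ℝ) / 2 →
          (c * Real.logb 2 n ≤
              (((Finset.range T).filter (fun t => d t < 1 ∧ p t = 1 / 2)).card : ℝ) ∨
           c * Real.logb 2 n ≤
              (((Finset.range T).filter
                (fun t => 1 / 200 ≤ d t ∧ (2 / 3) * d t < d (t + 1))).card : ℝ)) := by
  refine ⟨71, 1, by norm_num, le_refl 1, ?_⟩
  intro c hc n hn T hT p d o hp0 hot hof hdo hd hd00 hdn
  by_contra hcon
  push_neg at hcon
  obtain ⟨hg1, hg2⟩ := hcon
  have h32 : (1:ℝ) < 3/2 := by norm_num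
  have h2n : (2:ℝ) ≤ (n:ℝ) := by exact_mod_cast hn
  have hd0 : ∀ t, 0 ≤ d t := by
    intro t; cases t with
    | zero => exact hd00
    | succ s => exact (hd s).1
  have hL1 : (1:ℝ) ≤ Real.logb 2 n := by
    calc (1:ℝ) = Real.logb 2 2 := (Real.logb_self_eq_one (by norm_num)).symm
    _ ≤ Real.logb 2 n := Real.logb_le_logb_of_le (by norm_num) (by norm_num) h2n
  have hβ1 : (1:ℝ) ≤ Real.logb (3/2) 2 := by
    calc (1:ℝ) = Real.logb (3/2) (3/2) := (Real.logb_self_eq_one h32).symm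
    _ ≤ Real.logb (3/2) 2 := Real.logb_le_logb_of_le h32 (by norm_num) (by norm_num)
  have hβ2 : Real.logb (3/2) 2 ≤ 2 := by
    calc Real.logb (3/2) 2 ≤ Real.logb (3/2) (9/4) :=
          Real.logb_le_logb_of_le h32 (by norm_num) (by norm_num)
    _ = 2 := by
        rw [show (9:ℝ)/4 = (3/2)^(2:ℕ) by norm_num, Real.logb_pow,
          Real.logb_self_eq_one h32]
        norm_num
  -- the potential
  have hψnn : ∀ t, (0:ℝ) ≤ max (Real.logb (3/2) (100 * d t)) 0 := fun t => le_max_right _ _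
  have key : ∀ t, 1 < 100 * d (t+1) → d (t+1) ≤ 2/3 * d t →
      Real.logb (3/2) (100 * d (t+1)) + 1 ≤ Real.logb (3/2) (100 * d t) := by
    intro t h1 h2
    have hm : Real.logb (3/2) (3/2 * (100 * d (t+1))) ≤ Real.logb (3/2) (100 * d t) :=
      Real.logb_le_logb_of_le h32 (by linarith) (by linarith)
    rw [Real.logb_mul (by norm_num) (by linarith), Real.logb_self_eq_one h32] at hm
    linarith
  have hF1 : ∀ t, (3/200 ≤ d t ∧ d (t+1) ≤ 2/3 * d t) →
      max (Real.logb (3/2) (100 * d (t+1))) 0 ≤ max (Real.logb (3/2) (100 * d t)) 0 - 1 := by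
    rintro t ⟨h3, hsh⟩
    have hlogt : (1:ℝ) ≤ Real.logb (3/2) (100 * d t) := by
      calc (1:ℝ) = Real.logb (3/2) (3/2) := (Real.logb_self_eq_one h32).symm
      _ ≤ Real.logb (3/2) (100 * d t) :=
          Real.logb_le_logb_of_le h32 (by norm_num) (by linarith)
    have hmax : max (Real.logb (3/2) (100 * d t)) 0 = Real.logb (3/2) (100 * d t) :=
      max_eq_left (by linarith)
    rw [hmax]
    by_cases h : (1:ℝ) < 100 * d (t+1)
    · have hk := key t h hsh
      exact max_le (by linarith) (by linarith)
    · have hnp : Real.logb (3/2) (100 * d (t+1)) ≤ 0 :=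
        Real.logb_nonpos h32 (by nlinarith [hd0 (t+1)]) (le_of_not_gt h)
      exact max_le (by linarith) (by linarith)
  have hF2 : ∀ t, ¬ (1 / 200 ≤ d t ∧ (2 / 3) * d t < d (t + 1)) →
      max (Real.logb (3/2) (100 * d (t+1))) 0 ≤ max (Real.logb (3/2) (100 * d t)) 0 := by
    intro t hn2
    by_cases h : (1:ℝ) < 100 * d (t+1)
    · have hdt : 1/200 < d t := by nlinarith [(hd t).2]
      have hsh : d (t+1) ≤ 2/3 * d t := by
        by_contra hg; push_neg at hg
        exact hn2 ⟨le_of_lt hdt, by linarith⟩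
      have hk := key t h hsh
      have hml := le_max_left (Real.logb (3/2) (100 * d t)) (0:ℝ)
      exact max_le (by linarith) (hψnn t)
    · have hnp : Real.logb (3/2) (100 * d (t+1)) ≤ 0 :=
        Real.logb_nonpos h32 (by nlinarith [hd0 (t+1)]) (le_of_not_gt h)
      exact max_le (le_trans hnp (hψnn t)) (hψnn t)
  have hF3 : ∀ t, max (Real.logb (3/2) (100 * d (t+1))) 0
      ≤ max (Real.logb (3/2) (100 * d t)) 0 + Real.logb (3/2) 2 := by
    intro t
    by_cases h : (1:ℝ) < 100 * d (t+1)
    · have hdt : 0 < d t := by nlinarith [(hd t).2]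
      have hm : Real.logb (3/2) (100 * d (t+1)) ≤ Real.logb (3/2) (2 * (100 * d t)) :=
        Real.logb_le_logb_of_le h32 (by linarith) (by nlinarith [(hd t).2])
      rw [Real.logb_mul (by norm_num) (ne_of_gt (by linarith : (0:ℝ) < 100 * d t))] at hm
      have hml := le_max_left (Real.logb (3/2) (100 * d t)) (0:ℝ)
      exact max_le (by linarith) (by nlinarith [hψnn t, hβ1])
    · have hnp : Real.logb (3/2) (100 * d (t+1)) ≤ 0 :=
        Real.logb_nonpos h32 (by nlinarith [hd0 (t+1)]) (le_of_not_gt h)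
      exact max_le (by nlinarith [hψnn t, hβ1]) (by nlinarith [hψnn t, hβ1])
  have hpot := pot_count (fun t => max (Real.logb (3/2) (100 * d t)) 0)
      (Real.logb (3/2) 2)
      (fun t => 3/200 ≤ d t ∧ d (t+1) ≤ 2/3 * d t)
      (fun t => 1 / 200 ≤ d t ∧ (2 / 3) * d t < d (t + 1))
      hψnn (by linarith) hF1 (fun t _ _ => hF3 t) (fun t _ h2 => hF2 t h2) T
  -- bound on the initial potential
  have hψ0b : max (Real.logb (3/2) (100 * d 0)) 0 ≤ 14 * Real.logb 2 n := by
    have h50pos : (1:ℝ) ≤ 50 * n := by nlinarith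
    have hlog50n : Real.logb (3/2) (100 * d 0) ≤ Real.logb (3/2) (50 * n) := by
      rcases eq_or_lt_of_le hd00 with he | hpos
      · rw [show (100:ℝ) * d 0 = 0 by rw [← he]; ring, Real.logb_zero]
        exact Real.logb_nonneg h32 h50pos
      · exact Real.logb_le_logb_of_le h32 (by linarith) (by nlinarith)
    have hconv : Real.logb (3/2) ((50:ℝ) * n)
        = Real.logb (3/2) 2 * Real.logb 2 ((50:ℝ) * n) := by
      have hl2 : Real.log 2 ≠ 0 := ne_of_gt (Real.log_pos (by norm_num))
      have hl32 : Real.log (3/2) ≠ 0 := ne_of_gt (Real.log_pos h32)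
      rw [Real.logb, Real.logb, Real.logb]
      field_simp
    have h2_50n : Real.logb 2 ((50:ℝ) * n) = Real.logb 2 50 + Real.logb 2 n := by
      refine Real.logb_mul (by norm_num) ?_
      have : (0:ℝ) < n := by linarith
      exact ne_of_gt this
    have h50 : Real.logb 2 50 ≤ 6 := by
      calc Real.logb 2 50 ≤ Real.logb 2 64 :=
            Real.logb_le_logb_of_le (by norm_num) (by norm_num) (by norm_num)
      _ = 6 := by
          rw [show (64:ℝ) = 2^(6:ℕ) by norm_num, Real.logb_pow,
            Real.logb_self_eq_one (by norm_num)]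
          norm_num
    have h50nn : (0:ℝ) ≤ Real.logb 2 50 := Real.logb_nonneg (by norm_num) (by norm_num)
    have hlognn : (0:ℝ) ≤ Real.logb 2 ((50:ℝ) * n) := Real.logb_nonneg (by norm_num) h50pos
    refine max_le ?_ (by nlinarith)
    calc Real.logb (3/2) (100 * d 0) ≤ Real.logb (3/2) ((50:ℝ) * n) := hlog50n
    _ = Real.logb (3/2) 2 * Real.logb 2 ((50:ℝ) * n) := hconv
    _ ≤ 2 * Real.logb 2 ((50:ℝ) * n) := mul_le_mul_of_nonneg_right hβ2 hlognn
    _ = 2 * (Real.logb 2 50 + Real.logb 2 n) := by rw [h2_50n]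
    _ ≤ 2 * (6 + Real.logb 2 n) := by nlinarith
    _ ≤ 14 * Real.logb 2 n := by nlinarith
  -- real bound on strong shrink rounds
  have hSstR : ((((Finset.range T).filter
        (fun t => 3/200 ≤ d t ∧ d (t+1) ≤ 2/3 * d t)).card : ℝ))
      ≤ 14 * Real.logb 2 n
        + 2 * (((Finset.range T).filter
            (fun t => 1 / 200 ≤ d t ∧ (2 / 3) * d t < d (t + 1))).card : ℝ) := by
    have hψT := hψnn T
    have hc2nn : (0:ℝ) ≤ (((Finset.range T).filter
        (fun t => 1 / 200 ≤ d t ∧ (2 / 3) * d t < d (t + 1))).card : ℝ) :=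
      Nat.cast_nonneg _
    have hpot2 : ((((Finset.range T).filter
          (fun t => 3/200 ≤ d t ∧ d (t+1) ≤ 2/3 * d t)).card : ℝ))
        + max (Real.logb (3/2) (100 * d T)) 0
        ≤ max (Real.logb (3/2) (100 * d 0)) 0
          + Real.logb (3/2) 2 * (((Finset.range T).filter
              (fun t => 1 / 200 ≤ d t ∧ (2 / 3) * d t < d (t + 1))).card : ℝ) := hpot
    nlinarith [hpot2]
  -- coverage
  have hcovN : T ≤ ((Finset.range T).filter (fun t => d t < 1 ∧ p t = 1 / 2)).card
      + ((Finset.range T).filter (fun t => 1 / 200 ≤ d t ∧ (2 / 3) * d t < d (t + 1))).card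
      + ((Finset.range T).filter (fun t => 3/200 ≤ d t ∧ d (t+1) ≤ 2/3 * d t)).card
      + ((Finset.range T).filter
          (fun t => 1/100 < d t ∧ d t < 3/200 ∧ d (t+1) ≤ 2/3 * d t)).card
      + ((Finset.range T).filter (fun t => o t = false ∧ p t < 1/2)).card := by
    have hsub : Finset.range T ⊆
        (((((Finset.range T).filter (fun t => d t < 1 ∧ p t = 1 / 2))
          ∪ ((Finset.range T).filter (fun t => 1 / 200 ≤ d t ∧ (2 / 3) * d t < d (t + 1))))
          ∪ ((Finset.range T).filter (fun t => 3/200 ≤ d t ∧ d (t+1) ≤ 2/3 * d t)))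
          ∪ ((Finset.range T).filter
              (fun t => 1/100 < d t ∧ d t < 3/200 ∧ d (t+1) ≤ 2/3 * d t)))
          ∪ ((Finset.range T).filter (fun t => o t = false ∧ p t < 1/2)) := by
      intro t ht
      simp only [Finset.mem_union, Finset.mem_filter]
      by_cases hp1 : d t < 1 ∧ p t = 1/2
      · exact Or.inl (Or.inl (Or.inl (Or.inl ⟨ht, hp1⟩)))
      · by_cases hp2 : 1 / 200 ≤ d t ∧ (2 / 3) * d t < d (t + 1)
        · exact Or.inl (Or.inl (Or.inl (Or.inr ⟨ht, hp2⟩)))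
        · by_cases hdt : 1/100 < d t
          · have hsh : d (t+1) ≤ 2/3 * d t := by
              by_contra hgt; push_neg at hgt
              exact hp2 ⟨by linarith, by linarith⟩
            by_cases h3 : 3/200 ≤ d t
            · exact Or.inl (Or.inl (Or.inr ⟨ht, h3, hsh⟩))
            · exact Or.inl (Or.inr ⟨ht, hdt, lt_of_not_ge h3, hsh⟩)
          · push_neg at hdt
            have hofal : o t = false := by
              refine hdo t ?_
              rw [show (0.01:ℝ) = 1/100 by norm_num]
              linarith
            obtain ⟨k, hpk, -⟩ := pk_inv p o hp0 hot hof t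
            have hple : p t ≤ 1/2 := by rw [hpk]; exact half_pow_le k
            have hplt : p t < 1/2 :=
              lt_of_le_of_ne hple (fun he => hp1 ⟨by linarith, he⟩)
            exact Or.inr ⟨ht, hofal, hplt⟩
    have hcard := Finset.card_le_card hsub
    rw [Finset.card_range] at hcard
    have hc1 := Finset.card_union_le
      ((((Finset.range T).filter (fun t => d t < 1 ∧ p t = 1 / 2))
        ∪ ((Finset.range T).filter (fun t => 1 / 200 ≤ d t ∧ (2 / 3) * d t < d (t + 1))))
        ∪ ((Finset.range T).filter (fun t => 3/200 ≤ d t ∧ d (t+1) ≤ 2/3 * d t)))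
      (((Finset.range T).filter
          (fun t => 1/100 < d t ∧ d t < 3/200 ∧ d (t+1) ≤ 2/3 * d t)))
    have hc2 := Finset.card_union_le
      (((Finset.range T).filter (fun t => d t < 1 ∧ p t = 1 / 2))
        ∪ ((Finset.range T).filter (fun t => 1 / 200 ≤ d t ∧ (2 / 3) * d t < d (t + 1))))
      ((Finset.range T).filter (fun t => 3/200 ≤ d t ∧ d (t+1) ≤ 2/3 * d t))
    have hc3 := Finset.card_union_le
      ((Finset.range T).filter (fun t => d t < 1 ∧ p t = 1 / 2))
      ((Finset.range T).filter (fun t => 1 / 200 ≤ d t ∧ (2 / 3) * d t < d (t + 1)))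
    have hc0 := Finset.card_union_le
      (((((Finset.range T).filter (fun t => d t < 1 ∧ p t = 1 / 2))
        ∪ ((Finset.range T).filter (fun t => 1 / 200 ≤ d t ∧ (2 / 3) * d t < d (t + 1))))
        ∪ ((Finset.range T).filter (fun t => 3/200 ≤ d t ∧ d (t+1) ≤ 2/3 * d t)))
        ∪ (((Finset.range T).filter
            (fun t => 1/100 < d t ∧ d t < 3/200 ∧ d (t+1) ≤ 2/3 * d t))))
      ((Finset.range T).filter (fun t => o t = false ∧ p t < 1/2))
    omega
  -- falls are high rounds
  have hFN : ((Finset.range T).filter (fun t => o t = true)).card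
      ≤ ((Finset.range T).filter (fun t => 1 / 200 ≤ d t ∧ (2 / 3) * d t < d (t + 1))).card
      + ((Finset.range T).filter (fun t => 3/200 ≤ d t ∧ d (t+1) ≤ 2/3 * d t)).card
      + ((Finset.range T).filter
          (fun t => 1/100 < d t ∧ d t < 3/200 ∧ d (t+1) ≤ 2/3 * d t)).card := by
    have hsub : ((Finset.range T).filter (fun t => o t = true)) ⊆
        (((Finset.range T).filter (fun t => 1 / 200 ≤ d t ∧ (2 / 3) * d t < d (t + 1)))
          ∪ ((Finset.range T).filter (fun t => 3/200 ≤ d t ∧ d (t+1) ≤ 2/3 * d t)))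
          ∪ ((Finset.range T).filter
              (fun t => 1/100 < d t ∧ d t < 3/200 ∧ d (t+1) ≤ 2/3 * d t)) := by
      intro t htf
      simp only [Finset.mem_union, Finset.mem_filter] at htf ⊢
      obtain ⟨htT, hotr⟩ := htf
      have hdt : 1/100 < d t := by
        by_contra hle; push_neg at hle
        have hfa : o t = false := by
          refine hdo t ?_
          rw [show (0.01:ℝ) = 1/100 by norm_num]
          linarith
        rw [hfa] at hotr
        exact absurd hotr (by simp)
      by_cases hp2 : 1 / 200 ≤ d t ∧ (2 / 3) * d t < d (t + 1)
      · exact Or.inl (Or.inl ⟨htT, hp2⟩)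
      · have hsh : d (t+1) ≤ 2/3 * d t := by
          by_contra hgt; push_neg at hgt
          exact hp2 ⟨by linarith, by linarith⟩
        by_cases h3 : 3/200 ≤ d t
        · exact Or.inl (Or.inr ⟨htT, h3, hsh⟩)
        · exact Or.inr ⟨htT, hdt, lt_of_not_ge h3, hsh⟩
    have hcard := Finset.card_le_card hsub
    have hc1 := Finset.card_union_le
      ((((Finset.range T).filter (fun t => 1 / 200 ≤ d t ∧ (2 / 3) * d t < d (t + 1)))
        ∪ ((Finset.range T).filter (fun t => 3/200 ≤ d t ∧ d (t+1) ≤ 2/3 * d t))))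
      ((Finset.range T).filter
          (fun t => 1/100 < d t ∧ d t < 3/200 ∧ d (t+1) ≤ 2/3 * d t))
    have hc2 := Finset.card_union_le
      ((Finset.range T).filter (fun t => 1 / 200 ≤ d t ∧ (2 / 3) * d t < d (t + 1)))
      ((Finset.range T).filter (fun t => 3/200 ≤ d t ∧ d (t+1) ≤ 2/3 * d t))
    omega
  -- rises bounded by falls
  have hRN : ((Finset.range T).filter (fun t => o t = false ∧ p t < 1/2)).card
      ≤ ((Finset.range T).filter (fun t => o t = true)).card := by
    obtain ⟨k, -, hcnt⟩ := pk_inv p o hp0 hot hof T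
    omega
  -- weak shrink rounds bounded via predecessors
  have hWN : ((Finset.range T).filter
        (fun t => 1/100 < d t ∧ d t < 3/200 ∧ d (t+1) ≤ 2/3 * d t)).card
      ≤ ((Finset.range T).filter (fun t => 1 / 200 ≤ d t ∧ (2 / 3) * d t < d (t + 1))).card
      + ((Finset.range T).filter (fun t => 3/200 ≤ d t ∧ d (t+1) ≤ 2/3 * d t)).card + 1 := by
    have hmap : ∀ t ∈ (((Finset.range T).filter
          (fun t => 1/100 < d t ∧ d t < 3/200 ∧ d (t+1) ≤ 2/3 * d t)).erase 0),
        t - 1 ∈ ((Finset.range T).filter (fun t => 1 / 200 ≤ d t ∧ (2 / 3) * d t < d (t + 1)))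
          ∪ ((Finset.range T).filter (fun t => 3/200 ≤ d t ∧ d (t+1) ≤ 2/3 * d t)) := by
      intro t ht
      obtain ⟨ht0, htf⟩ := Finset.mem_erase.mp ht
      obtain ⟨htT, hW⟩ := Finset.mem_filter.mp htf
      obtain ⟨m, rfl⟩ : ∃ m, t = m + 1 := ⟨t - 1, by omega⟩
      obtain ⟨hWd, -, -⟩ := hW
      simp only [Nat.add_sub_cancel, Finset.mem_union, Finset.mem_filter]
      have hd2 : d (m+1) ≤ 2 * d m := (hd m).2
      have hdm : 1/200 < d m := by linarith
      have hmT : m ∈ Finset.range T := by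
        rw [Finset.mem_range] at htT ⊢; omega
      by_cases hg : (2 / 3) * d m < d (m + 1)
      · exact Or.inl ⟨hmT, le_of_lt hdm, hg⟩
      · push_neg at hg
        exact Or.inr ⟨hmT, by linarith, by linarith⟩
    have hinj : Set.InjOn (· - 1)
        ((((Finset.range T).filter
          (fun t => 1/100 < d t ∧ d t < 3/200 ∧ d (t+1) ≤ 2/3 * d t)).erase 0) : Set ℕ) := by
      intro a ha b hb hab
      have ha0 := (Finset.mem_erase.mp ha).1
      have hb0 := (Finset.mem_erase.mp hb).1
      simp only at hab
      omega
    have h1 := Finset.card_le_card_of_injOn (· - 1) hmap hinj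
    have h3 := Finset.card_union_le
      ((Finset.range T).filter (fun t => 1 / 200 ≤ d t ∧ (2 / 3) * d t < d (t + 1)))
      ((Finset.range T).filter (fun t => 3/200 ≤ d t ∧ d (t+1) ≤ 2/3 * d t))
    have h2 : ((Finset.range T).filter
          (fun t => 1/100 < d t ∧ d t < 3/200 ∧ d (t+1) ≤ 2/3 * d t)).card
        ≤ (((Finset.range T).filter
          (fun t => 1/100 < d t ∧ d t < 3/200 ∧ d (t+1) ≤ 2/3 * d t)).erase 0).card + 1 := by
      by_cases h0 : (0:ℕ) ∈ ((Finset.range T).filter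
          (fun t => 1/100 < d t ∧ d t < 3/200 ∧ d (t+1) ≤ 2/3 * d t))
      · rw [Finset.card_erase_of_mem h0]
        have := Finset.card_pos.mpr ⟨0, h0⟩
        omega
      · rw [Finset.erase_eq_of_notMem h0]
        omega
    omega
  -- final arithmetic
  have hcL : (1:ℝ) ≤ c * Real.logb 2 n := by nlinarith
  have hLle : Real.logb 2 n ≤ c * Real.logb 2 n := by nlinarith
  have c1 : (T:ℝ) ≤ (((Finset.range T).filter (fun t => d t < 1 ∧ p t = 1 / 2)).card : ℝ)
      + (((Finset.range T).filter (fun t => 1 / 200 ≤ d t ∧ (2 / 3) * d t < d (t + 1))).card : ℝ)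
      + (((Finset.range T).filter (fun t => 3/200 ≤ d t ∧ d (t+1) ≤ 2/3 * d t)).card : ℝ)
      + (((Finset.range T).filter
          (fun t => 1/100 < d t ∧ d t < 3/200 ∧ d (t+1) ≤ 2/3 * d t)).card : ℝ)
      + (((Finset.range T).filter (fun t => o t = false ∧ p t < 1/2)).card : ℝ) := by
    exact_mod_cast hcovN
  have c2 : (((Finset.range T).filter (fun t => o t = false ∧ p t < 1/2)).card : ℝ)
      ≤ (((Finset.range T).filter (fun t => o t = true)).card : ℝ) := by exact_mod_cast hRN
  have c3 : (((Finset.range T).filter (fun t => o t = true)).card : ℝ)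
      ≤ (((Finset.range T).filter (fun t => 1 / 200 ≤ d t ∧ (2 / 3) * d t < d (t + 1))).card : ℝ)
      + (((Finset.range T).filter (fun t => 3/200 ≤ d t ∧ d (t+1) ≤ 2/3 * d t)).card : ℝ)
      + (((Finset.range T).filter
          (fun t => 1/100 < d t ∧ d t < 3/200 ∧ d (t+1) ≤ 2/3 * d t)).card : ℝ) := by
    exact_mod_cast hFN
  have c4 : (((Finset.range T).filter
        (fun t => 1/100 < d t ∧ d t < 3/200 ∧ d (t+1) ≤ 2/3 * d t)).card : ℝ)
      ≤ (((Finset.range T).filter (fun t => 1 / 200 ≤ d t ∧ (2 / 3) * d t < d (t + 1))).card : ℝ)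
      + (((Finset.range T).filter (fun t => 3/200 ≤ d t ∧ d (t+1) ≤ 2/3 * d t)).card : ℝ)
      + 1 := by exact_mod_cast hWN
  linarith [hT, hg1, hg2, hSstR, c1, c2, c3, c4, hcL, hLle]
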